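/- Consider an online minimization problem over discrete time-steps in which a solution is a finite set of objects and the optimum size changes by at most $\delta$ per time-step. Suppose algorithm $\mathcal{A}$ maintains at every time-step an $\alpha$-approximate solution and inserts at most $\beta$ objects into its solution per time-step (its deletions per time-step may be unbounded), where $\alpha, \beta \ge 1$. Define algorithm $\mathcal{A}'$ that simulates $\mathcal{A}$ but, instead of deleting objects, moves them to a garbage set included in its output, and at the end of each time-step removes $\min(\beta + \delta\alpha, |\text{garbage}|)$ objects from the garbage set. Then at every time-step, $\mathcal{A}'$ outputs an $\alpha$-approximate solution, and both the number of objects inserted into and the number deleted from the output of $\mathcal{A}'$ per time-step are at most $2\beta + \delta\alpha$. -/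
import Mathlib


open Finset

/-- Drop `r` elements from a finset. -/
noncomputable def dropN {γ : Type*} [DecidableEq γ] (r : ℕ) (X : Finset γ) : Finset γ :=
  (X.toList.drop r).toFinset

lemma dropN_subset {γ : Type*} [DecidableEq γ] (r : ℕ) (X : Finset γ) :
    dropN r X ⊆ X := by
  intro x hx
  simp only [dropN, List.mem_toFinset] at hx
  exact Finset.mem_toList.1 ((List.drop_subset r _) hx)

lemma dropN_card {γ : Type*} [DecidableEq γ] (r : ℕ) (X : Finset γ) :
    (dropN r X).card = X.card - r := by
  have hnd : (X.toList.drop r).Nodup := (List.drop_sublist r X.toList).nodup X.nodup_toList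
  simp [dropN, List.toFinset_card_of_nodup hnd, List.length_drop, Finset.length_toList]

/-- The garbage set. -/
noncomputable def gar {γ : Type*} [DecidableEq γ] (r : ℕ) (S : ℕ → Finset γ) : ℕ → Finset γ
  | 0 => ∅
  | t + 1 => dropN r ((S t ∪ gar r S t) \ S (t + 1))

/-- De-amortizing deletion recourse: from an `a`-approximate algorithm with worst-case
insertion recourse `b` one gets an `a`-approximate algorithm with worst-case recourse
(both insertion and deletion) at most `2b + δa`. -/
theorem deamortize_deletion_recourse {γ : Type*} [DecidableEq γ] (a b : ℝ) (δ : ℕ)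
    (ha : 1 ≤ a) (hb : 1 ≤ b)
    (OPT : ℕ → ℕ) (hOPT0 : OPT 0 = 0)
    (hδ : ∀ t, ((OPT (t + 1) : ℤ) - OPT t).natAbs ≤ δ)
    (S : ℕ → Finset γ) (hS0 : S 0 = ∅)
    (happrox : ∀ t, ((S t).card : ℝ) ≤ a * OPT t)
    (hins : ∀ t, ((S (t + 1) \ S t).card : ℝ) ≤ b) :
    ∃ O : ℕ → Finset γ,
      O 0 = ∅ ∧
      (∀ t, S t ⊆ O t) ∧
      (∀ t, ((O t).card : ℝ) ≤ a * OPT t) ∧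
      (∀ t, ((O (t + 1) \ O t).card : ℝ) ≤ 2 * b + δ * a) ∧
      (∀ t, ((O t \ O (t + 1)).card : ℝ) ≤ 2 * b + δ * a) := by
  classical
  have ha0 : (0:ℝ) ≤ a := by linarith
  have hbd0 : (0:ℝ) ≤ b + δ * a := by positivity
  set r : ℕ := ⌈b + δ * a⌉₊ with hrdef
  have hrge : b + δ * a ≤ (r : ℝ) := Nat.le_ceil _
  have hrlt : (r : ℝ) < b + δ * a + 1 := Nat.ceil_lt_add_one hbd0
  set G : ℕ → Finset γ := gar r S with hGdef
  refine ⟨fun t => S t ∪ G t, ?_, fun t => Finset.subset_union_left, ?_, ?_, ?_⟩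
  · simp [hS0, hGdef, gar]
  · -- approximation ratio
    intro t
    induction t with
    | zero => simpa [hS0, hGdef, gar] using happrox 0
    | succ t ih =>
      have hGsub : G (t + 1) ⊆ (S t ∪ G t) \ S (t + 1) := dropN_subset _ _
      have hGcard : (G (t + 1)).card = ((S t ∪ G t) \ S (t + 1)).card - r :=
        dropN_card _ _
      have hdisj : Disjoint (S (t + 1)) (G (t + 1)) := by
        refine Finset.disjoint_left.2 fun x hx hx' => ?_
        exact (Finset.mem_sdiff.1 (hGsub hx')).2 hx
      set X := (S t ∪ G t) \ S (t + 1) with hX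
      have hcardU : (S (t + 1) ∪ G (t + 1)).card
          = (S (t + 1)).card + (G (t + 1)).card :=
        Finset.card_union_of_disjoint hdisj
      by_cases hle : X.card ≤ r
      · have : (G (t + 1)).card = 0 := by omega
        rw [hcardU, this]
        simpa using happrox (t + 1)
      · push_neg at hle
        have hG' : ((G (t + 1)).card : ℝ) = (X.card : ℝ) - r := by
          rw [hGcard]
          push_cast [Nat.cast_sub (le_of_lt hle)]
          ring
        -- |X| + |S(t+1)| = |S(t+1) \ (S t ∪ G t)| + |S t ∪ G t|
        have key : X.card + (S (t + 1)).card
            = (S (t + 1) \ (S t ∪ G t)).card + (S t ∪ G t).card := by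
          rw [hX, Finset.card_sdiff_add_card, Finset.card_sdiff_add_card,
            Finset.union_comm]
        have hsub2 : S (t + 1) \ (S t ∪ G t) ⊆ S (t + 1) \ S t := by
          intro x hx
          simp only [Finset.mem_sdiff, Finset.mem_union, not_or] at hx ⊢
          exact ⟨hx.1, hx.2.1⟩
        have h1 : ((S (t + 1) \ (S t ∪ G t)).card : ℝ) ≤ b :=
          le_trans (by exact_mod_cast Finset.card_le_card hsub2) (hins t)
        have h2 : ((OPT t : ℝ)) ≤ (OPT (t + 1) : ℝ) + δ := by
          have := hδ t
          have h3 : ((OPT t : ℤ)) ≤ (OPT (t + 1) : ℤ) + δ := by omega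
          exact_mod_cast h3
        have hkey : ((X.card : ℝ)) + (S (t + 1)).card
            = ((S (t + 1) \ (S t ∪ G t)).card : ℝ) + (S t ∪ G t).card := by
          exact_mod_cast congrArg (fun n : ℕ => (n : ℝ)) key
        have hOPTmul : a * (OPT t : ℝ) ≤ a * ((OPT (t + 1) : ℝ) + δ) :=
          mul_le_mul_of_nonneg_left h2 ha0
        rw [hcardU]
        push_cast
        rw [hG']
        nlinarith [ih, hrge]
  · -- insertion recourse
    intro t
    have hsub : (S (t + 1) ∪ G (t + 1)) \ (S t ∪ G t) ⊆ S (t + 1) \ S t := by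
      intro x hx
      simp only [Finset.mem_sdiff, Finset.mem_union, not_or] at hx ⊢
      rcases hx with ⟨hx1 | hx1, hx2, hx3⟩
      · exact ⟨hx1, hx2⟩
      · exfalso
        have := dropN_subset r ((S t ∪ G t) \ S (t + 1)) hx1
        rcases Finset.mem_sdiff.1 this with ⟨hm, _⟩
        rcases Finset.mem_union.1 hm with h | h
        · exact hx2 h
        · exact hx3 h
    have : (((S (t + 1) ∪ G (t + 1)) \ (S t ∪ G t)).card : ℝ) ≤ b :=
      le_trans (by exact_mod_cast Finset.card_le_card hsub) (hins t)
    nlinarith [show (0:ℝ) ≤ (δ:ℝ) from Nat.cast_nonneg δ]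
  · -- deletion recourse
    intro t
    have hGsub : G (t + 1) ⊆ (S t ∪ G t) \ S (t + 1) := dropN_subset _ _
    have heq : (S t ∪ G t) \ (S (t + 1) ∪ G (t + 1))
        = ((S t ∪ G t) \ S (t + 1)) \ G (t + 1) := by
      ext x
      simp only [Finset.mem_sdiff, Finset.mem_union, not_or]
      tauto
    set X := (S t ∪ G t) \ S (t + 1) with hX
    have hc : (X \ G (t + 1)).card = X.card - (G (t + 1)).card :=
      Finset.card_sdiff_of_subset hGsub
    have hGcard : (G (t + 1)).card = X.card - r := dropN_card _ _
    have hler : (X \ G (t + 1)).card ≤ r := by omega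
    have : (((S t ∪ G t) \ (S (t + 1) ∪ G (t + 1))).card : ℝ) ≤ r := by
      rw [heq]; exact_mod_cast hler
    nlinarith
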